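/- Let R̂ be an N×N Hermitian matrix and γ > 0. For any w ∈ ℂ^N, the supremum of w^H R w over all Hermitian matrices R with ‖R - R̂‖_F ≤ √γ equals w^H R̂ w + √γ ‖w‖², and it is attained at R = R̂ + √γ (w w^H)/‖w‖² when w ≠ 0. -/

import Mathlib

open Matrix Complex
open scoped ComplexOrder

/-- The largest real eigenvalue of a complex matrix (as `sSup` of its set of real
eigenvalues); for a Hermitian matrix this is the largest eigenvalue. -/
noncomputable def lambdaMax {N : ℕ} (A : Matrix (Fin N) (Fin N) ℂ) : ℝ :=
  sSup {t : ℝ | ∃ v : Fin N → ℂ, v ≠ 0 ∧ A.mulVec v = (t : ℂ) • v}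

open Classical in
/-- The inverse of the positive definite square root of a positive definite matrix
(junk value `0` if the matrix is not positive definite). -/
noncomputable def isqrt {N : ℕ} (R : Matrix (Fin N) (Fin N) ℂ) : Matrix (Fin N) (Fin N) ℂ :=
  if h : R.PosDef then
    ((h.posSemidef.1.eigenvectorUnitary : Matrix (Fin N) (Fin N) ℂ) *
      diagonal ((↑) ∘ (Real.sqrt ·) ∘ h.posSemidef.1.eigenvalues) *
      (star h.posSemidef.1.eigenvectorUnitary : Matrix (Fin N) (Fin N) ℂ))⁻¹ else 0

/-- Euclidean norm of a complex vector. -/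
noncomputable def vecNorm {N : ℕ} (v : Fin N → ℂ) : ℝ :=
  Real.sqrt (∑ i, Complex.normSq (v i))

/-- Frobenius norm of a complex matrix. -/
noncomputable def frobNorm {N M : ℕ} (X : Matrix (Fin N) (Fin M) ℂ) : ℝ :=
  Real.sqrt (∑ i, ∑ j, Complex.normSq (X i j))

lemma frobNorm_nonneg {N M : ℕ} (X : Matrix (Fin N) (Fin M) ℂ) : 0 ≤ frobNorm X :=
  Real.sqrt_nonneg _

lemma vecNorm_sq {N : ℕ} (v : Fin N → ℂ) : vecNorm v ^ 2 = ∑ i, Complex.normSq (v i) :=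
  Real.sq_sqrt (Finset.sum_nonneg fun _ _ => Complex.normSq_nonneg _)

lemma quad_re_le {N : ℕ} (Δ : Matrix (Fin N) (Fin N) ℂ) (w : Fin N → ℂ) :
    (star w ⬝ᵥ Δ.mulVec w).re ≤ frobNorm Δ * ∑ i, Complex.normSq (w i) := by
  set S : ℝ := ∑ i, Complex.normSq (w i) with hS
  have h1 : (star w ⬝ᵥ Δ.mulVec w).re ≤ ‖star w ⬝ᵥ Δ.mulVec w‖ := Complex.re_le_norm _
  refine h1.trans ?_
  have h2 : ‖star w ⬝ᵥ Δ.mulVec w‖ ≤ ∑ p : Fin N × Fin N, ‖Δ p.1 p.2‖ * (‖w p.1‖ * ‖w p.2‖) := by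
    rw [dotProduct]
    calc ‖∑ i, star w i * Δ.mulVec w i‖ ≤ ∑ i, ‖star w i * Δ.mulVec w i‖ :=
          norm_sum_le _ _
      _ ≤ ∑ i, ∑ j, ‖Δ i j‖ * (‖w i‖ * ‖w j‖) := by
          refine Finset.sum_le_sum fun i _ => ?_
          rw [Matrix.mulVec, dotProduct, norm_mul]
          calc ‖star w i‖ * ‖∑ j, Δ i j * w j‖ ≤ ‖star w i‖ * ∑ j, ‖Δ i j * w j‖ := by
                gcongr; exact norm_sum_le _ _
            _ = ∑ j, ‖Δ i j‖ * (‖w i‖ * ‖w j‖) := by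
                rw [Finset.mul_sum]; congr 1; funext j
                simp [Pi.star_apply, norm_mul]; ring
      _ = ∑ p : Fin N × Fin N, ‖Δ p.1 p.2‖ * (‖w p.1‖ * ‖w p.2‖) := by
          rw [Fintype.sum_prod_type]
  refine h2.trans ?_
  have hcs := Finset.sum_mul_sq_le_sq_mul_sq Finset.univ
    (fun p : Fin N × Fin N => ‖Δ p.1 p.2‖) (fun p => ‖w p.1‖ * ‖w p.2‖)
  have hA : ∑ p : Fin N × Fin N, ‖Δ p.1 p.2‖ ^ 2 = frobNorm Δ ^ 2 := by
    rw [frobNorm, Real.sq_sqrt (show (0:ℝ) ≤ ∑ i, ∑ j, Complex.normSq (Δ i j) from Finset.sum_nonneg fun _ _ => Finset.sum_nonneg fun _ _ => Complex.normSq_nonneg _), Fintype.sum_prod_type]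
    simp [Complex.sq_norm]
  have hB : ∑ p : Fin N × Fin N, (‖w p.1‖ * ‖w p.2‖) ^ 2 = S ^ 2 := by
    rw [Fintype.sum_prod_type, sq]
    simp only [mul_pow, Complex.sq_norm]
    rw [← Finset.sum_mul_sum]
  calc ∑ p : Fin N × Fin N, ‖Δ p.1 p.2‖ * (‖w p.1‖ * ‖w p.2‖)
      = Real.sqrt ((∑ p : Fin N × Fin N, ‖Δ p.1 p.2‖ * (‖w p.1‖ * ‖w p.2‖)) ^ 2) := by
        rw [Real.sqrt_sq (Finset.sum_nonneg fun p _ => by positivity)]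
    _ ≤ Real.sqrt (frobNorm Δ ^ 2 * S ^ 2) := by
        apply Real.sqrt_le_sqrt; rw [← hA, ← hB]; exact hcs
    _ = frobNorm Δ * S := by
        rw [← mul_pow, Real.sqrt_sq (mul_nonneg (frobNorm_nonneg _)
          (Finset.sum_nonneg fun _ _ => Complex.normSq_nonneg _))]


lemma star_dot {N : ℕ} (w : Fin N → ℂ) :
    star w ⬝ᵥ w = ((∑ i, Complex.normSq (w i) : ℝ) : ℂ) := by
  rw [dotProduct]
  push_cast
  exact Finset.sum_congr rfl fun i _ => by
    simp [Pi.star_apply, ← Complex.normSq_eq_conj_mul_self]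

lemma quad_vecMulVec {N : ℕ} (w : Fin N → ℂ) :
    star w ⬝ᵥ (vecMulVec w (star w)).mulVec w
      = (((∑ i, Complex.normSq (w i) : ℝ) : ℂ))^2 := by
  have hmv : (vecMulVec w (star w)).mulVec w = (star w ⬝ᵥ w) • w := by
    funext i
    rw [Matrix.mulVec, dotProduct, dotProduct, Pi.smul_apply, Finset.sum_smul]
    refine Finset.sum_congr rfl fun j _ => ?_
    simp [Matrix.vecMulVec_apply, smul_eq_mul]
    ring
  rw [hmv, dotProduct_smul, star_dot, smul_eq_mul, sq]

lemma herm_smul_vmv {N : ℕ} (c : ℝ) (w : Fin N → ℂ) :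
    (c • vecMulVec w (star w)).IsHermitian := by
  ext i j
  simp [Matrix.conjTranspose_apply, Matrix.vecMulVec_apply, mul_comm]

lemma frob_smul_vmv {N : ℕ} (c : ℝ) (hc : 0 ≤ c) (w : Fin N → ℂ) :
    frobNorm (c • vecMulVec w (star w)) = c * ∑ i, Complex.normSq (w i) := by
  rw [frobNorm]
  have : ∀ i j, Complex.normSq ((c • vecMulVec w (star w)) i j)
      = c^2 * (Complex.normSq (w i) * Complex.normSq (w j)) := by
    intro i j
    simp only [Matrix.smul_apply, Matrix.vecMulVec_apply]
    rw [Complex.real_smul, Complex.normSq_mul, Complex.normSq_mul, Complex.normSq_ofReal, sq]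
    simp [Complex.normSq_conj]
  simp only [this]
  have h2 : ∑ i, ∑ j, c^2 * (Complex.normSq (w i) * Complex.normSq (w j))
      = (c * ∑ i, Complex.normSq (w i)) ^ 2 := by
    rw [show (c * ∑ i, Complex.normSq (w i)) ^ 2
        = c^2 * ((∑ i, Complex.normSq (w i)) * ∑ j, Complex.normSq (w j)) from by ring,
      Finset.sum_mul_sum, Finset.mul_sum]
    exact Finset.sum_congr rfl fun i _ => by rw [Finset.mul_sum]
  rw [h2,
    Real.sqrt_sq (mul_nonneg hc (Finset.sum_nonneg fun _ _ => Complex.normSq_nonneg _))]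

/-- the supremum of `wᴴ R w` over Hermitian `R` with `‖R - R̂‖_F ≤ √γ`
equals `wᴴ R̂ w + √γ ‖w‖²`, attained at `R = R̂ + √γ (w wᴴ)/‖w‖²` when `w ≠ 0`. -/
theorem sup_quad_over_frobenius_ball {N : ℕ}
    (Rhat : Matrix (Fin N) (Fin N) ℂ) (hRhat : Rhat.IsHermitian)
    (γ : ℝ) (hγ : 0 < γ) (w : Fin N → ℂ) :
    IsLUB
      {r : ℝ | ∃ R : Matrix (Fin N) (Fin N) ℂ, R.IsHermitian ∧
        frobNorm (R - Rhat) ≤ Real.sqrt γ ∧ r = (star w ⬝ᵥ R.mulVec w).re}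
      ((star w ⬝ᵥ Rhat.mulVec w).re + Real.sqrt γ * vecNorm w ^ 2) ∧
    (w ≠ 0 →
      (Rhat + (Real.sqrt γ / vecNorm w ^ 2) • vecMulVec w (star w)).IsHermitian ∧
      frobNorm ((Rhat + (Real.sqrt γ / vecNorm w ^ 2) • vecMulVec w (star w)) - Rhat)
        ≤ Real.sqrt γ ∧
      (star w ⬝ᵥ (Rhat + (Real.sqrt γ / vecNorm w ^ 2) • vecMulVec w (star w)).mulVec w).re
        = (star w ⬝ᵥ Rhat.mulVec w).re + Real.sqrt γ * vecNorm w ^ 2) := by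
  have hS0 : (0:ℝ) ≤ ∑ i, Complex.normSq (w i) :=
    Finset.sum_nonneg fun _ _ => Complex.normSq_nonneg _
  have hvn : vecNorm w ^ 2 = ∑ i, Complex.normSq (w i) := vecNorm_sq w
  have hdec : ∀ R : Matrix (Fin N) (Fin N) ℂ,
      (star w ⬝ᵥ R.mulVec w).re
        = (star w ⬝ᵥ Rhat.mulVec w).re + (star w ⬝ᵥ (R - Rhat).mulVec w).re := by
    intro R
    have h : R.mulVec w = Rhat.mulVec w + (R - Rhat).mulVec w := by
      rw [← Matrix.add_mulVec]
      rw [add_comm, sub_add_cancel]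
    rw [h, dotProduct_add, Complex.add_re]
  -- the attainment part
  have hatt : w ≠ 0 →
      (Rhat + (Real.sqrt γ / vecNorm w ^ 2) • vecMulVec w (star w)).IsHermitian ∧
      frobNorm ((Rhat + (Real.sqrt γ / vecNorm w ^ 2) • vecMulVec w (star w)) - Rhat)
        ≤ Real.sqrt γ ∧
      (star w ⬝ᵥ (Rhat + (Real.sqrt γ / vecNorm w ^ 2) • vecMulVec w (star w)).mulVec w).re
        = (star w ⬝ᵥ Rhat.mulVec w).re + Real.sqrt γ * vecNorm w ^ 2 := by
    intro hw
    obtain ⟨i0, hi0⟩ := Function.ne_iff.mp hw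
    have hSpos : (0:ℝ) < ∑ i, Complex.normSq (w i) :=
      Finset.sum_pos' (fun i _ => Complex.normSq_nonneg _)
        ⟨i0, Finset.mem_univ _, Complex.normSq_pos.mpr hi0⟩
    have hc0 : (0:ℝ) ≤ Real.sqrt γ / vecNorm w ^ 2 := by
      rw [hvn]; positivity
    refine ⟨hRhat.add (herm_smul_vmv _ _), ?_, ?_⟩
    · rw [add_sub_cancel_left, frob_smul_vmv _ hc0, hvn,
        div_mul_cancel₀ _ (ne_of_gt hSpos)]
    · rw [Matrix.add_mulVec, dotProduct_add, Complex.add_re]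
      congr 1
      rw [Matrix.smul_mulVec, dotProduct_smul, quad_vecMulVec,
        Complex.real_smul, ← Complex.ofReal_pow, ← Complex.ofReal_mul,
        Complex.ofReal_re, hvn]
      field_simp
  refine ⟨⟨?_, ?_⟩, hatt⟩
  · -- upper bound
    rintro r ⟨R, hR, hfrob, rfl⟩
    rw [hdec R]
    gcongr
    calc (star w ⬝ᵥ (R - Rhat).mulVec w).re
        ≤ frobNorm (R - Rhat) * ∑ i, Complex.normSq (w i) := quad_re_le _ w
      _ ≤ Real.sqrt γ * vecNorm w ^ 2 := by
          rw [hvn]; exact mul_le_mul_of_nonneg_right hfrob hS0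
  · -- least upper bound
    intro b hb
    by_cases hw : w = 0
    · have h0 : ((star w ⬝ᵥ Rhat.mulVec w).re + Real.sqrt γ * vecNorm w ^ 2) = 0 := by
        subst hw
        simp [vecNorm]
      rw [h0]
      have hmem : (0:ℝ) ∈ {r : ℝ | ∃ R : Matrix (Fin N) (Fin N) ℂ, R.IsHermitian ∧
          frobNorm (R - Rhat) ≤ Real.sqrt γ ∧ r = (star w ⬝ᵥ R.mulVec w).re} := by
        refine ⟨Rhat, hRhat, ?_, ?_⟩
        · simp [frobNorm, Real.sqrt_nonneg]
        · subst hw; simp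
      exact hb hmem
    · obtain ⟨h1, h2, h3⟩ := hatt hw
      exact h3 ▸ hb ⟨_, h1, h2, rfl⟩
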